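/- For all real x, y ≥ 0, a, b: writing M(x,y) = Re((x+iy)^(3/2)) = min over q ≤ 0 of sup over p ≥ 0 of (xp + qy - (4/27)(p³ - 3pq²)), one has 2M(x,y) ≥ M(x+a, √(a²+(y+b)²)) + M(x-a, √(a²+(y-b)²)). -/

import Mathlib

noncomputable def M (x y : ℝ) : ℝ := (((x : ℂ) + (y : ℂ) * Complex.I) ^ ((3 : ℂ) / 2)).re

noncomputable def Pf (u w : ℝ) : ℝ :=
  (2*u - Real.sqrt (u^2 + w)) * Real.sqrt ((Real.sqrt (u^2 + w) + u)/2)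

lemma M_eq_Pf (x y : ℝ) (hy : 0 ≤ y) : M x y = Pf x (y^2) := by
  by_cases hz : (x:ℂ) + (y:ℂ) * Complex.I = 0
  · have hx0 : x = 0 := by
      have := congrArg Complex.re hz; simpa using this
    have hy0 : y = 0 := by
      have := congrArg Complex.im hz; simpa using this
    subst hx0; subst hy0
    simp [M, Pf, Complex.zero_cpow (by norm_num : (3:ℂ)/2 ≠ 0)]
  · set z : ℂ := (x:ℂ) + (y:ℂ) * Complex.I with hzdef
    set r : ℝ := Real.sqrt (x^2 + y^2) with hr
    have hrx : |x| ≤ r := by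
      rw [hr, ← Real.sqrt_sq_eq_abs]
      exact Real.sqrt_le_sqrt (by nlinarith [sq_nonneg y])
    have habs := abs_le.mp hrx
    have hr2 : r^2 = x^2 + y^2 := Real.sq_sqrt (by positivity)
    set S : ℝ := Real.sqrt ((r + x)/2) with hS
    set T : ℝ := Real.sqrt ((r - x)/2) with hT
    have hS0 : 0 ≤ S := Real.sqrt_nonneg _
    have hT0 : 0 ≤ T := Real.sqrt_nonneg _
    have hS2 : S^2 = (r + x)/2 := Real.sq_sqrt (by linarith)
    have hT2 : T^2 = (r - x)/2 := Real.sq_sqrt (by linarith)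
    have hST : 2*S*T = y := by
      have h1 : S*T = Real.sqrt (((r+x)/2) * ((r-x)/2)) := (Real.sqrt_mul (by linarith) _).symm
      have h2 : ((r+x)/2) * ((r-x)/2) = (y/2)^2 := by nlinarith [hr2]
      have h3 : S*T = y/2 := by rw [h1, h2, Real.sqrt_sq (by linarith)]
      linarith [h3]
    have hu : ((S:ℂ) + (T:ℂ) * Complex.I)^2 = z := by
      have hre : S^2 - T^2 = x := by rw [hS2, hT2]; ring
      have : ((S:ℂ) + (T:ℂ) * Complex.I)^2
          = ((S^2 - T^2 : ℝ) : ℂ) + ((2*S*T : ℝ) : ℂ) * Complex.I := by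
        push_cast
        linear_combination (T:ℂ)^2 * Complex.I_sq
      rw [this, hre, hST]
    set ω : ℂ := z ^ ((2:ℂ)⁻¹) with hω
    have hω2 : ω^2 = z := by
      have h := Complex.cpow_nat_inv_pow z (two_ne_zero)
      rw [hω]
      norm_num at h ⊢
      exact h
    have harg0 : 0 ≤ Complex.arg z := by
      rw [Complex.arg_nonneg_iff]; simp [hzdef]; exact hy
    have hargpi : Complex.arg z ≤ Real.pi := Complex.arg_le_pi _
    have him : (Complex.log z * (2:ℂ)⁻¹).im = Complex.arg z / 2 := by
      simp [Complex.mul_im, Complex.log_im, Complex.inv_im, Complex.inv_re]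
      ring
    have hωre : 0 ≤ ω.re ∧ 0 ≤ ω.im := by
      rw [hω, Complex.cpow_def_of_ne_zero hz]
      constructor
      · rw [Complex.exp_re, him]
        refine mul_nonneg (Real.exp_pos _).le ?_
        apply Real.cos_nonneg_of_mem_Icc
        constructor
        · linarith [Real.pi_pos]
        · linarith
      · rw [Complex.exp_im, him]
        refine mul_nonneg (Real.exp_pos _).le ?_
        apply Real.sin_nonneg_of_nonneg_of_le_pi <;> linarith [Real.pi_pos]
    have hωu : ω = (S:ℂ) + (T:ℂ) * Complex.I := by
      have hfac : (ω - ((S:ℂ) + (T:ℂ)*Complex.I)) * (ω + ((S:ℂ) + (T:ℂ)*Complex.I)) = 0 := by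
        linear_combination hω2 - hu
      rcases mul_eq_zero.mp hfac with h | h
      · exact sub_eq_zero.mp h
      · exfalso
        have hωeq : ω = -((S:ℂ) + (T:ℂ)*Complex.I) := by linear_combination h
        have h1 : ω.re = -S := by rw [hωeq]; simp
        have h2 : ω.im = -T := by rw [hωeq]; simp
        have hSz : S = 0 := by have := hωre.1; rw [h1] at this; linarith
        have hTz : T = 0 := by have := hωre.2; rw [h2] at this; linarith
        apply hz
        rw [← hu, hSz, hTz]; simp
    have h32 : z ^ ((3:ℂ)/2) = z * ω := by
      rw [hω, show (3:ℂ)/2 = 1 + (2:ℂ)⁻¹ by norm_num, Complex.cpow_add _ _ hz, Complex.cpow_one]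
    have hcube : ((((S:ℂ) + (T:ℂ)*Complex.I))^3).re = S^3 - 3*S*T^2 := by
      have : (((S:ℂ) + (T:ℂ)*Complex.I))^3
          = ((S^3 - 3*S*T^2 : ℝ) : ℂ) + ((3*S^2*T - T^3 : ℝ) : ℂ) * Complex.I := by
        push_cast
        linear_combination (3*(S:ℂ)*(T:ℂ)^2 + (T:ℂ)^3*Complex.I) * Complex.I_sq
      rw [this, Complex.add_re, Complex.ofReal_re, Complex.mul_re, Complex.ofReal_im,
        Complex.I_re, Complex.I_im, Complex.ofReal_re]
      ring
    have hM : M x y = S^3 - 3*S*T^2 := by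
      show (z ^ ((3:ℂ)/2)).re = _
      rw [h32, ← hu, hωu, show (((S:ℂ)+(T:ℂ)*Complex.I))^2 * (((S:ℂ)+(T:ℂ)*Complex.I)) = (((S:ℂ)+(T:ℂ)*Complex.I))^3 by ring, hcube]
    have hP : Pf x (y^2) = (2*x - r)*S := by
      rw [Pf, ← hr, ← hS]
    rw [hM, hP]
    linear_combination S*hS2 - 3*S*hT2

set_option maxHeartbeats 1000000 in
lemma keyG (S₁ T₁ S₂ T₂ α p q : ℝ)
    (hS₁ : 0 < S₁) (hS₂ : 0 < S₂) (hT₁ : 0 ≤ T₁) (hT₂ : 0 ≤ T₂)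
    (hc : S₁^2 - T₁^2 - (S₂^2 - T₂^2) = 2*α)
    (h1 : 4*S₁^2*T₁^2 = α^2 + p^2)
    (h2 : 4*S₂^2*T₂^2 = α^2 + q^2) :
    4*α*S₁*S₂*(S₁-S₂) ≤ (2*α^2 + p*(p-q))*S₂ + (2*α^2 - q*(p-q))*S₁ := by
  have hv : (0:ℝ) < S₁ + S₂ := by linarith
  have hXnn : (0:ℝ) ≤ 4*S₁*T₁*S₂*T₂ := by positivity
  have hX2 : (4*S₁*T₁*S₂*T₂)^2 = (α^2+p^2)*(α^2+q^2) := by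
    linear_combination (4*S₂^2*T₂^2)*h1 + (α^2+p^2)*h2
  have hK : α^2 ≤ 4*S₁*T₁*S₂*T₂ := by
    nlinarith [hX2, hXnn, mul_nonneg (sq_nonneg α) (sq_nonneg p),
      mul_nonneg (sq_nonneg α) (sq_nonneg q), sq_nonneg (p*q)]
  have hpq : p*q ≤ 4*S₁*T₁*S₂*T₂ - α^2 := by
    nlinarith [hX2, hXnn, hK, sq_nonneg (p-q), sq_nonneg (p+q), sq_nonneg α]
  have hG2 : 0 ≤ 2*α^2*(S₁+S₂) + 4*S₁*S₂*((T₁-T₂)*(S₁*T₁-S₂*T₂)) - 4*α*S₁*S₂*(S₁-S₂) := by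
    have hid : (S₁+S₂) * (2*α^2*(S₁+S₂) + 4*S₁*S₂*((T₁-T₂)*(S₁*T₁-S₂*T₂)) - 4*α*S₁*S₂*(S₁-S₂))
        = 2*(((S₁+S₂)/2*(S₁-S₂)^2 - (T₁+T₂)/2*(T₁-T₂)*(S₁-S₂))^2
           + (T₁-T₂)^2*(((T₁+T₂)/2)^2+((S₁+S₂)/2)^2)*(4*S₁*S₂)) := by
      linear_combination (-S₂^2*α - S₂^2*T₂^2/2 + S₂^4/2 + T₁^2*S₂^2/2 - 2*S₁*S₂*α - S₁*S₂*T₂^2 - S₁*S₂^3 + S₁*T₁^2*S₂ - S₁^2*α - S₁^2*T₂^2/2 + S₁^2*T₁^2/2 + S₁^3*S₂ - S₁^4/2) * hc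
    have hrhs : 0 ≤ (S₁+S₂) * (2*α^2*(S₁+S₂) + 4*S₁*S₂*((T₁-T₂)*(S₁*T₁-S₂*T₂)) - 4*α*S₁*S₂*(S₁-S₂)) := by
      rw [hid]; positivity
    nlinarith [hrhs, hv]
  have hfin : (2*α^2 + p*(p-q))*S₂ + (2*α^2 - q*(p-q))*S₁ - 4*α*S₁*S₂*(S₁-S₂)
      = (2*α^2*(S₁+S₂) + 4*S₁*S₂*((T₁-T₂)*(S₁*T₁-S₂*T₂)) - 4*α*S₁*S₂*(S₁-S₂))
        + ((4*S₁*T₁*S₂*T₂ - α^2)*(S₁+S₂) - p*q*(S₁+S₂)) := by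
    linear_combination -S₂*h1 - S₁*h2
  have hpqv : p*q*(S₁+S₂) ≤ (4*S₁*T₁*S₂*T₂ - α^2)*(S₁+S₂) :=
    mul_le_mul_of_nonneg_right hpq hv.le
  linarith [hG2, hpqv, hfin]

lemma Pf_hasDeriv {c e : ℝ → ℝ} {c' e' τ : ℝ} (hc : HasDerivAt c c' τ)
    (he : HasDerivAt e e' τ) (hw : 0 < e τ) :
    HasDerivAt (fun σ => Pf (c σ) (e σ))
      ((3/2)*(c' * Real.sqrt ((Real.sqrt ((c τ)^2 + e τ) + c τ)/2)
        - e'/(4 * Real.sqrt ((Real.sqrt ((c τ)^2 + e τ) + c τ)/2)))) τ := by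
  have hh : 0 < (c τ)^2 + e τ := by positivity
  set r : ℝ := Real.sqrt ((c τ)^2 + e τ) with hrdef
  have hr : 0 < r := Real.sqrt_pos.mpr hh
  have hr2 : r^2 = (c τ)^2 + e τ := Real.sq_sqrt hh.le
  have hcr : |c τ| < r := by
    have h1 : |c τ|^2 < r^2 := by rw [hr2, sq_abs]; linarith
    exact lt_of_pow_lt_pow_left₀ 2 hr.le h1
  have habs := abs_lt.mp hcr
  have hSpos : 0 < (r + c τ)/2 := by linarith
  set S : ℝ := Real.sqrt ((r + c τ)/2) with hSdef
  have hS : 0 < S := Real.sqrt_pos.mpr hSpos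
  have hS2 : S^2 = (r + c τ)/2 := Real.sq_sqrt hSpos.le
  have h1 : HasDerivAt (fun σ => (c σ)^2 + e σ) (2*(c τ)*c' + e') τ := by
    have := (hc.pow 2).add he
    simp [pow_one] at this; exact this
  have h2 : HasDerivAt (fun σ => Real.sqrt ((c σ)^2 + e σ)) ((2*(c τ)*c' + e')/(2*r)) τ :=
    h1.sqrt hh.ne'
  have h3 : HasDerivAt (fun σ => (Real.sqrt ((c σ)^2 + e σ) + c σ)/2)
      (((2*(c τ)*c' + e')/(2*r) + c')/2) τ := (h2.add hc).div_const 2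
  have h4 : HasDerivAt (fun σ => Real.sqrt ((Real.sqrt ((c σ)^2 + e σ) + c σ)/2))
      ((((2*(c τ)*c' + e')/(2*r) + c')/2)/(2*S)) τ := h3.sqrt hSpos.ne'
  have h5 : HasDerivAt (fun σ => 2*(c σ) - Real.sqrt ((c σ)^2 + e σ))
      (2*c' - (2*(c τ)*c' + e')/(2*r)) τ := (hc.const_mul 2).sub h2
  have h6 := h5.mul h4
  have hfun : (fun σ => Pf (c σ) (e σ))
      = fun σ => (2*(c σ) - Real.sqrt ((c σ)^2 + e σ)) * Real.sqrt ((Real.sqrt ((c σ)^2 + e σ) + c σ)/2) := by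
    funext σ; rfl
  rw [hfun]
  refine h6.congr_deriv ?_
  rw [← hSdef, ← hrdef]
  have hcτ : c τ = 2*S^2 - r := by rw [hS2]; ring
  have heτ : e τ = r^2 - (c τ)^2 := by rw [hr2]; ring
  rw [hcτ]
  field_simp
  ring

lemma g_hasDeriv (x y a b τ : ℝ) (ha : a ≠ 0) (hτ : 0 < τ) :
    ∃ D, D ≤ 0 ∧ HasDerivAt (fun σ => Pf (x+σ*a) ((σ*a)^2+(y+σ*b)^2)
      + Pf (x-σ*a) ((σ*a)^2+(y-σ*b)^2)) D τ := by
  have hτa : τ*a ≠ 0 := mul_ne_zero hτ.ne' ha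
  have hτa2 : 0 < (τ*a)^2 := by positivity
  have hw1 : 0 < (τ*a)^2+(y+τ*b)^2 := by nlinarith [sq_nonneg (y+τ*b)]
  have hw2 : 0 < (τ*a)^2+(y-τ*b)^2 := by nlinarith [sq_nonneg (y-τ*b)]
  have hc1 : HasDerivAt (fun σ => x + σ*a) a τ := by
    simpa using ((hasDerivAt_id τ).mul_const a).const_add x
  have hc2 : HasDerivAt (fun σ => x - σ*a) (-a) τ := by
    have := (hasDerivAt_const τ x).sub ((hasDerivAt_id τ).mul_const a); simp at this; exact this
  have he1 : HasDerivAt (fun σ => (σ*a)^2+(y+σ*b)^2) (2*(τ*a)*a + 2*(y+τ*b)*b) τ := by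
    have h1 : HasDerivAt (fun σ:ℝ => (σ*a)^2) (2*(τ*a)*a) τ := by
      have := ((hasDerivAt_id τ).mul_const a).pow 2; simp at this; exact this
    have h2 : HasDerivAt (fun σ:ℝ => (y+σ*b)^2) (2*(y+τ*b)*b) τ := by
      have := (((hasDerivAt_id τ).mul_const b).const_add y).pow 2; simp at this; exact this
    exact h1.add h2
  have he2 : HasDerivAt (fun σ => (σ*a)^2+(y-σ*b)^2) (2*(τ*a)*a + 2*(y-τ*b)*(-b)) τ := by
    have h1 : HasDerivAt (fun σ:ℝ => (σ*a)^2) (2*(τ*a)*a) τ := by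
      have := ((hasDerivAt_id τ).mul_const a).pow 2; simp at this; exact this
    have h2 : HasDerivAt (fun σ:ℝ => (y-σ*b)^2) (2*(y-τ*b)*(-b)) τ := by
      have := (((hasDerivAt_id τ).mul_const b).const_sub y).pow 2
      simp at this; exact this.congr_deriv (by ring)
    exact h1.add h2
  -- abbreviations
  set u₁ : ℝ := x + τ*a with hu₁
  set u₂ : ℝ := x - τ*a with hu₂
  set w₁ : ℝ := (τ*a)^2+(y+τ*b)^2 with hw₁def
  set w₂ : ℝ := (τ*a)^2+(y-τ*b)^2 with hw₂def
  set r₁ : ℝ := Real.sqrt (u₁^2 + w₁) with hr₁def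
  set r₂ : ℝ := Real.sqrt (u₂^2 + w₂) with hr₂def
  set S₁ : ℝ := Real.sqrt ((r₁ + u₁)/2) with hS₁def
  set S₂ : ℝ := Real.sqrt ((r₂ + u₂)/2) with hS₂def
  have H1 : HasDerivAt (fun σ => Pf (x+σ*a) ((σ*a)^2+(y+σ*b)^2))
      ((3/2)*(a * S₁ - (2*(τ*a)*a + 2*(y+τ*b)*b)/(4*S₁))) τ := Pf_hasDeriv hc1 he1 hw1
  have H2 : HasDerivAt (fun σ => Pf (x-σ*a) ((σ*a)^2+(y-σ*b)^2))
      ((3/2)*((-a) * S₂ - (2*(τ*a)*a + 2*(y-τ*b)*(-b))/(4*S₂))) τ := Pf_hasDeriv hc2 he2 hw2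
  refine ⟨_, ?_, H1.add H2⟩
  -- now prove the derivative is ≤ 0
  set T₁ : ℝ := Real.sqrt ((r₁ - u₁)/2) with hT₁def
  set T₂ : ℝ := Real.sqrt ((r₂ - u₂)/2) with hT₂def
  have hh₁ : 0 < u₁^2 + w₁ := by rw [hw₁def]; nlinarith [sq_nonneg u₁, hw1]
  have hh₂ : 0 < u₂^2 + w₂ := by rw [hw₂def]; nlinarith [sq_nonneg u₂, hw2]
  have hr₁ : 0 < r₁ := by rw [hr₁def]; exact Real.sqrt_pos.mpr hh₁
  have hr₂ : 0 < r₂ := by rw [hr₂def]; exact Real.sqrt_pos.mpr hh₂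
  have hr₁2 : r₁^2 = u₁^2 + w₁ := by rw [hr₁def]; exact Real.sq_sqrt hh₁.le
  have hr₂2 : r₂^2 = u₂^2 + w₂ := by rw [hr₂def]; exact Real.sq_sqrt hh₂.le
  have hS₁b : S₁ = Real.sqrt ((r₁ + u₁)/2) := hS₁def
  have hS₂b : S₂ = Real.sqrt ((r₂ + u₂)/2) := hS₂def
  have hw₁b : w₁ = (τ*a)^2+(y+τ*b)^2 := hw₁def
  have hw₂b : w₂ = (τ*a)^2+(y-τ*b)^2 := hw₂def
  have hu₁b : u₁ = x + τ*a := hu₁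
  have hu₂b : u₂ = x - τ*a := hu₂
  clear_value u₁ u₂ w₁ w₂ r₁ r₂ S₁ S₂ T₁ T₂
  have hcr₁ : |u₁| < r₁ := by
    have h1 : |u₁|^2 < r₁^2 := by rw [hr₁2, sq_abs]; linarith [hw1]
    exact lt_of_pow_lt_pow_left₀ 2 hr₁.le h1
  have hcr₂ : |u₂| < r₂ := by
    have h1 : |u₂|^2 < r₂^2 := by rw [hr₂2, sq_abs]; linarith [hw2]
    exact lt_of_pow_lt_pow_left₀ 2 hr₂.le h1
  have habs₁ := abs_lt.mp hcr₁
  have habs₂ := abs_lt.mp hcr₂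
  have hS₁ : 0 < S₁ := by rw [hS₁b]; exact Real.sqrt_pos.mpr (by linarith)
  have hS₂ : 0 < S₂ := by rw [hS₂b]; exact Real.sqrt_pos.mpr (by linarith)
  have hT₁ : 0 ≤ T₁ := by rw [hT₁def]; exact Real.sqrt_nonneg _
  have hT₂ : 0 ≤ T₂ := by rw [hT₂def]; exact Real.sqrt_nonneg _
  have hS₁2 : S₁^2 = (r₁ + u₁)/2 := by rw [hS₁b]; exact Real.sq_sqrt (by linarith)
  have hS₂2 : S₂^2 = (r₂ + u₂)/2 := by rw [hS₂b]; exact Real.sq_sqrt (by linarith)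
  have hT₁2 : T₁^2 = (r₁ - u₁)/2 := by rw [hT₁def]; exact Real.sq_sqrt (by linarith)
  have hT₂2 : T₂^2 = (r₂ - u₂)/2 := by rw [hT₂def]; exact Real.sq_sqrt (by linarith)
  have hcc : S₁^2 - T₁^2 - (S₂^2 - T₂^2) = 2*(τ*a) := by
    rw [hS₁2, hT₁2, hS₂2, hT₂2, hu₁b, hu₂b]; ring
  have h1c : 4*S₁^2*T₁^2 = (τ*a)^2 + (y+τ*b)^2 := by
    rw [hS₁2, hT₁2]; linear_combination hr₁2 + hw₁b
  have h2c : 4*S₂^2*T₂^2 = (τ*a)^2 + (y-τ*b)^2 := by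
    rw [hS₂2, hT₂2]; linear_combination hr₂2 + hw₂b
  have hkey := keyG S₁ T₁ S₂ T₂ (τ*a) (y+τ*b) (y-τ*b) hS₁ hS₂ hT₁ hT₂ hcc h1c h2c
  have hkey2 : 4*a*S₁*S₂*(S₁-S₂) ≤ (2*(τ*a)*a + 2*(y+τ*b)*b)*S₂ + (2*(τ*a)*a + 2*(y-τ*b)*(-b))*S₁ := by
    have h2 : τ * (4*a*S₁*S₂*(S₁-S₂))
        ≤ τ * ((2*(τ*a)*a + 2*(y+τ*b)*b)*S₂ + (2*(τ*a)*a + 2*(y-τ*b)*(-b))*S₁) := by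
      calc τ * (4*a*S₁*S₂*(S₁-S₂)) = 4*(τ*a)*S₁*S₂*(S₁-S₂) := by ring
        _ ≤ (2*(τ*a)^2 + (y+τ*b)*((y+τ*b)-(y-τ*b)))*S₂
            + (2*(τ*a)^2 - (y-τ*b)*((y+τ*b)-(y-τ*b)))*S₁ := hkey
        _ = τ * ((2*(τ*a)*a + 2*(y+τ*b)*b)*S₂ + (2*(τ*a)*a + 2*(y-τ*b)*(-b))*S₁) := by ring
    exact le_of_mul_le_mul_left h2 hτ
  have hDeq : (3/2)*(a * S₁ - (2*(τ*a)*a + 2*(y+τ*b)*b)/(4*S₁))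
      + (3/2)*((-a) * S₂ - (2*(τ*a)*a + 2*(y-τ*b)*(-b))/(4*S₂))
      = (3/8)*((4*a*S₁*S₂*(S₁-S₂)) - ((2*(τ*a)*a + 2*(y+τ*b)*b)*S₂ + (2*(τ*a)*a + 2*(y-τ*b)*(-b))*S₁))/(S₁*S₂) := by
    field_simp
    ring
  rw [hDeq]
  exact div_nonpos_of_nonpos_of_nonneg (by linarith [hkey2]) (by positivity)

lemma main_ne (x y a b : ℝ) (ha : a ≠ 0) :
    Pf (x+a) (a^2+(y+b)^2) + Pf (x-a) (a^2+(y-b)^2) ≤ 2 * Pf x (y^2) := by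
  set g : ℝ → ℝ := fun τ => Pf (x+τ*a) ((τ*a)^2+(y+τ*b)^2) + Pf (x-τ*a) ((τ*a)^2+(y-τ*b)^2)
    with hg
  have hgc : Continuous g := by
    rw [hg]; unfold Pf; fun_prop
  have hanti : AntitoneOn g (Set.Icc 0 1) := by
    apply antitoneOn_of_deriv_nonpos (convex_Icc 0 1) hgc.continuousOn
    · intro τ hτ
      rw [interior_Icc] at hτ
      obtain ⟨D, _, hD⟩ := g_hasDeriv x y a b τ ha hτ.1
      exact hD.differentiableAt.differentiableWithinAt
    · intro τ hτ
      rw [interior_Icc] at hτ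
      obtain ⟨D, hD0, hD⟩ := g_hasDeriv x y a b τ ha hτ.1
      rw [hD.deriv]
      exact hD0
  have h01 : (0:ℝ) ∈ Set.Icc (0:ℝ) 1 := by norm_num
  have h11 : (1:ℝ) ∈ Set.Icc (0:ℝ) 1 := by norm_num
  have := hanti h01 h11 (by norm_num)
  have hg1 : g 1 = Pf (x+a) (a^2+(y+b)^2) + Pf (x-a) (a^2+(y-b)^2) := by
    rw [hg]; norm_num
  have hg0 : g 0 = 2 * Pf x (y^2) := by
    rw [hg]; norm_num; ring
  rw [hg1, hg0] at this
  exact this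

lemma main_all (x y a b : ℝ) :
    Pf (x+a) (a^2+(y+b)^2) + Pf (x-a) (a^2+(y-b)^2) ≤ 2 * Pf x (y^2) := by
  rcases eq_or_ne a 0 with rfl | ha
  · have hcont : ContinuousAt (fun a' : ℝ =>
        Pf (x+a') (a'^2+(y+b)^2) + Pf (x-a') (a'^2+(y-b)^2)) 0 := by
      apply Continuous.continuousAt
      unfold Pf; fun_prop
    have htend : Filter.Tendsto (fun a' : ℝ =>
        Pf (x+a') (a'^2+(y+b)^2) + Pf (x-a') (a'^2+(y-b)^2))
        (nhdsWithin 0 {(0:ℝ)}ᶜ)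
        (nhds (Pf (x+0) (0^2+(y+b)^2) + Pf (x-0) (0^2+(y-b)^2))) :=
      (hcont.tendsto).mono_left nhdsWithin_le_nhds
    have hev : ∀ᶠ a' in nhdsWithin 0 {(0:ℝ)}ᶜ,
        Pf (x+a') (a'^2+(y+b)^2) + Pf (x-a') (a'^2+(y-b)^2) ≤ 2 * Pf x (y^2) := by
      apply Filter.eventually_of_mem self_mem_nhdsWithin
      intro a' ha'
      exact main_ne x y a' b ha'
    have := le_of_tendsto htend hev
    norm_num at this
    norm_num
    convert this using 2 <;> ring
  · exact main_ne x y a b ha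

theorem stmt7 (x y a b : ℝ) (hy : 0 ≤ y) :
    2 * M x y ≥
      M (x + a) (Real.sqrt (a ^ 2 + (y + b) ^ 2)) +
        M (x - a) (Real.sqrt (a ^ 2 + (y - b) ^ 2)) := by
  have h1 : M (x + a) (Real.sqrt (a ^ 2 + (y + b) ^ 2)) = Pf (x+a) (a^2+(y+b)^2) := by
    rw [M_eq_Pf _ _ (Real.sqrt_nonneg _), Real.sq_sqrt (by positivity)]
  have h2 : M (x - a) (Real.sqrt (a ^ 2 + (y - b) ^ 2)) = Pf (x-a) (a^2+(y-b)^2) := by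
    rw [M_eq_Pf _ _ (Real.sqrt_nonneg _), Real.sq_sqrt (by positivity)]
  rw [ge_iff_le, h1, h2, M_eq_Pf x y hy]
  exact main_all x y a b
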